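/- arXiv:2605.24586 — 2 statements merged into one kernel-verified Lean document; each statement's English description precedes it below -/
import Mathlib

section
/- For all non-negative integers n and positive integers k, the number of lattice points (x₁,…,x_n,y₁,…,y_n) ∈ ℤ^{2n} with 0 ≤ x₁ ≤ ⋯ ≤ x_n ≤ k−1 and 0 ≤ y_i ≤ x_i for all i, equals the Stirling number of the second kind S(n+k, k). -/
set_option linter.unusedSectionVars false
open scoped Classical

/-- The Stirling number of the second kind `S(m, k)`: the number of partitions of an
`m`-element set into `k` non-empty blocks. -/
noncomputable def stirling2 (m k : ℕ) : ℕ :=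
  Nat.card {P : Finpartition (Finset.univ : Finset (Fin m)) // P.parts.card = k}

/-- The complete homogeneous symmetric polynomial of degree `n` evaluated at
`(1, 2, …, k)`, i.e. `∑_{1 ≤ z₁ ≤ ⋯ ≤ z_n ≤ k} z₁ ⋯ z_n`. -/
noncomputable def hNat (n k : ℕ) : ℕ :=
  ∑ f ∈ Finset.univ.filter (fun f : Fin n → Fin k => Monotone f), ∏ i, ((f i : ℕ) + 1)

open Finset

section Partitions

variable {α β : Type*} [Fintype α] [DecidableEq α] [Fintype β] [DecidableEq β]

noncomputable def pcount (α : Type*) [Fintype α] [DecidableEq α] (k : ℕ) : ℕ :=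
  Fintype.card {P : Finpartition (univ : Finset α) // P.parts.card = k}

noncomputable def finsetOrderIso (e : α ≃ β) : Finset α ≃o Finset β where
  toEquiv := e.finsetCongr
  map_rel_iff' := by
    intro s t
    simp only [Equiv.finsetCongr_apply, Finset.le_iff_subset]
    exact Finset.map_subset_map

lemma coe_finsetOrderIso (e : α ≃ β) :
    ((finsetOrderIso e : Finset α ≃o Finset β) : Finset α ≃ Finset β) = e.finsetCongr := rfl

lemma finsetOrderIso_univ (e : α ≃ β) : (finsetOrderIso e) (univ : Finset α) = univ := by
  ext b; simp [finsetOrderIso, Equiv.finsetCongr_apply]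

noncomputable def finpartitionCongr (e : α ≃ β) :
    Finpartition (univ : Finset α) ≃ Finpartition (univ : Finset β) where
  toFun P := (P.map (finsetOrderIso e)).copy (finsetOrderIso_univ e)
  invFun P := (P.map (finsetOrderIso e.symm)).copy (finsetOrderIso_univ e.symm)
  left_inv P := by
    ext t
    simp only [Finpartition.parts_map, Finpartition.copy_parts, Finset.mem_map_equiv,
      coe_finsetOrderIso, ← Equiv.finsetCongr_symm, Equiv.symm_symm, Equiv.symm_apply_apply]
  right_inv P := by
    ext t
    simp only [Finpartition.parts_map, Finpartition.copy_parts, Finset.mem_map_equiv,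
      coe_finsetOrderIso, ← Equiv.finsetCongr_symm, Equiv.symm_symm, Equiv.symm_symm,
      Equiv.symm_apply_apply]
    rw [Equiv.apply_symm_apply]

lemma finpartitionCongr_parts_card (e : α ≃ β) (P : Finpartition (univ : Finset α)) :
    ((finpartitionCongr e) P).parts.card = P.parts.card := by
  simp [finpartitionCongr, Finpartition.parts_map]

lemma pcount_congr (e : α ≃ β) (k : ℕ) : pcount α k = pcount β k := by
  apply Fintype.card_congr
  exact Equiv.subtypeEquiv (finpartitionCongr e) fun P => by
    rw [finpartitionCongr_parts_card]

/-- Constructor for finpartitions of `univ`. -/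
def mkUniv (parts : Finset (Finset α))
    (hdisj : (parts : Set (Finset α)).PairwiseDisjoint id)
    (hcov : ∀ x : α, ∃ t ∈ parts, x ∈ t)
    (hne : ∅ ∉ parts) : Finpartition (univ : Finset α) where
  parts := parts
  supIndep := Finset.supIndep_iff_pairwiseDisjoint.2 hdisj
  sup_parts := by
    apply le_antisymm
    · exact Finset.sup_le fun t _ => Finset.subset_univ t
    · intro x _
      rcases hcov x with ⟨t, ht, hx⟩
      exact Finset.mem_sup.2 ⟨t, ht, hx⟩
  bot_notMem := hne

@[simp] lemma mkUniv_parts (parts : Finset (Finset α)) (h1) (h2) (h3) :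
    (mkUniv parts h1 h2 h3).parts = parts := rfl

section OptionRec

variable (P : Finpartition (univ : Finset (Option α)))

lemma eraseNone_eq_empty_iff {s : Finset (Option α)} (hs : s ∈ P.parts) :
    Finset.eraseNone s = ∅ ↔ s = {none} := by
  constructor
  · intro h
    have hsub : s ⊆ {none} := by
      intro x hx
      cases x with
      | none => simp
      | some a =>
        exfalso
        have : a ∈ Finset.eraseNone s := Finset.mem_eraseNone.2 hx
        rw [h] at this
        exact absurd this (Finset.notMem_empty a)
    rcases Finset.subset_singleton_iff.1 hsub with h' | h'
    · exact absurd h' (P.ne_bot hs)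
    · exact h'
  · rintro rfl
    exact Finset.eraseNone_none

lemma eraseNone_injOn :
    Set.InjOn Finset.eraseNone (P.parts : Set (Finset (Option α))) := by
  intro s hs t ht h
  by_contra hne
  have hd : Disjoint s t := P.disjoint hs ht hne
  have hse : Finset.eraseNone s = ∅ := by
    by_contra hse
    rcases Finset.nonempty_of_ne_empty hse with ⟨a, ha⟩
    have has : (some a : Option α) ∈ s := Finset.mem_eraseNone.1 ha
    have hat : (some a : Option α) ∈ t := Finset.mem_eraseNone.1 (h ▸ ha)
    exact Finset.disjoint_left.1 hd has hat
  have hs1 : s = {none} := (eraseNone_eq_empty_iff P hs).1 hse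
  have ht1 : t = {none} := (eraseNone_eq_empty_iff P ht).1 (by rw [← h]; exact hse)
  exact hne (hs1.trans ht1.symm)

/-- Remove `none` from a partition of `Option α`. -/
def shrink : Finpartition (univ : Finset α) := by
  refine mkUniv ((P.parts.image Finset.eraseNone).erase ∅) ?_ ?_ ?_
  · intro u hu v hv huv
    simp only [Finset.coe_erase, Set.mem_diff, Finset.coe_image, Set.mem_image] at hu hv
    obtain ⟨⟨s, hs, rfl⟩, -⟩ := hu
    obtain ⟨⟨t, ht, rfl⟩, -⟩ := hv
    have hst : s ≠ t := fun h => huv (by rw [h])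
    have hd : Disjoint s t := P.disjoint (by exact_mod_cast hs) (by exact_mod_cast ht) hst
    show Disjoint (Finset.eraseNone s) (Finset.eraseNone t)
    rw [Finset.disjoint_left]
    intro a ha ha'
    exact Finset.disjoint_left.1 hd (Finset.mem_eraseNone.1 ha) (Finset.mem_eraseNone.1 ha')
  · intro x
    rcases P.exists_mem (Finset.mem_univ (some x)) with ⟨t, ht, hx⟩
    refine ⟨Finset.eraseNone t, ?_, Finset.mem_eraseNone.2 hx⟩
    refine Finset.mem_erase.2 ⟨?_, Finset.mem_image_of_mem _ ht⟩
    intro h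
    have hmem := Finset.mem_eraseNone.2 hx
    rw [h] at hmem
    exact absurd hmem (Finset.notMem_empty x)
  · simp

lemma mem_shrink_parts {u : Finset α} :
    u ∈ (shrink P).parts ↔ u ≠ ∅ ∧ ∃ s ∈ P.parts, Finset.eraseNone s = u := by
  show u ∈ (P.parts.image Finset.eraseNone).erase ∅ ↔ _
  simp [Finset.mem_erase]

lemma shrink_parts_card_of_mem (h : {none} ∈ P.parts) :
    (shrink P).parts.card = P.parts.card - 1 := by
  have h1 : (P.parts.image Finset.eraseNone).card = P.parts.card :=
    Finset.card_image_of_injOn (eraseNone_injOn P)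
  have h2 : ∅ ∈ P.parts.image Finset.eraseNone :=
    Finset.mem_image.2 ⟨{none}, h, Finset.eraseNone_none⟩
  show ((P.parts.image Finset.eraseNone).erase ∅).card = _
  rw [Finset.card_erase_of_mem h2, h1]

lemma empty_not_mem_image (h : {none} ∉ P.parts) :
    ∅ ∉ P.parts.image Finset.eraseNone := by
  intro he
  rcases Finset.mem_image.1 he with ⟨s, hs, hse⟩
  exact h (((eraseNone_eq_empty_iff P hs).1 hse) ▸ hs)

lemma shrink_parts_card_of_not_mem (h : {none} ∉ P.parts) :
    (shrink P).parts.card = P.parts.card := by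
  have h1 : (P.parts.image Finset.eraseNone).card = P.parts.card :=
    Finset.card_image_of_injOn (eraseNone_injOn P)
  show ((P.parts.image Finset.eraseNone).erase ∅).card = _
  rw [Finset.erase_eq_of_notMem (empty_not_mem_image P h), h1]

/-- Add `{none}` as a new singleton block. -/
def extendSingle (Q : Finpartition (univ : Finset α)) : Finpartition (univ : Finset (Option α)) := by
  refine mkUniv (insert {none} (Q.parts.image fun t => t.map Function.Embedding.some)) ?_ ?_ ?_
  · intro u hu v hv huv
    simp only [Finset.coe_insert, Set.mem_insert_iff, Finset.coe_image, Set.mem_image] at hu hv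
    show Disjoint u v
    rw [Finset.disjoint_left]
    intro x hx hx'
    rcases hu with rfl | ⟨s, hs, rfl⟩ <;> rcases hv with rfl | ⟨t, ht, rfl⟩
    · exact huv rfl
    · rcases Finset.mem_map.1 hx' with ⟨b, -, hb⟩
      rw [Finset.mem_singleton.1 hx] at hb
      exact Option.some_ne_none b hb
    · rcases Finset.mem_map.1 hx with ⟨b, -, hb⟩
      rw [Finset.mem_singleton.1 hx'] at hb
      exact Option.some_ne_none b hb
    · have hst : s ≠ t := fun h => huv (by rw [h])
      have hd : Disjoint s t := Q.disjoint (by exact_mod_cast hs) (by exact_mod_cast ht) hst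
      rcases Finset.mem_map.1 hx with ⟨b, hb, rfl⟩
      rcases Finset.mem_map.1 hx' with ⟨c, hc, hcb⟩
      have : c = b := Option.some_injective α hcb
      subst this
      exact Finset.disjoint_left.1 hd hb hc
  · intro x
    cases x with
    | none => exact ⟨{none}, Finset.mem_insert_self _ _, Finset.mem_singleton_self _⟩
    | some a =>
      rcases Q.exists_mem (Finset.mem_univ a) with ⟨t, ht, hat⟩
      exact ⟨t.map Function.Embedding.some,
        Finset.mem_insert_of_mem (Finset.mem_image_of_mem _ ht),
        Finset.mem_map_of_mem _ hat⟩
  · intro h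
    rcases Finset.mem_insert.1 h with h | h
    · exact absurd h.symm (Finset.singleton_ne_empty _)
    · rcases Finset.mem_image.1 h with ⟨t, ht, hte⟩
      rw [Finset.map_eq_empty] at hte
      exact Q.ne_bot ht (hte.trans Finset.bot_eq_empty.symm)

/-- Add `none` into the block `t`. -/
def extendInto (Q : Finpartition (univ : Finset α)) (t : Finset α) (ht : t ∈ Q.parts) :
    Finpartition (univ : Finset (Option α)) := by
  refine mkUniv (insert (insert none (t.map Function.Embedding.some))
      ((Q.parts.erase t).image fun u => u.map Function.Embedding.some)) ?_ ?_ ?_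
  · intro u hu v hv huv
    simp only [Finset.coe_insert, Set.mem_insert_iff, Finset.coe_image, Set.mem_image] at hu hv
    show Disjoint u v
    rw [Finset.disjoint_left]
    intro x hx hx'
    rcases hu with rfl | ⟨s, hs, rfl⟩ <;> rcases hv with rfl | ⟨s', hs', rfl⟩
    · exact huv rfl
    · -- x ∈ insert none (map some t), x ∈ map some s', s' ∈ parts.erase t
      rcases Finset.mem_map.1 hx' with ⟨b, hb, rfl⟩
      rcases Finset.mem_insert.1 hx with h | h
      · exact (Option.some_ne_none b h).elim
      · rcases Finset.mem_map.1 h with ⟨c, hc, hcb⟩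
        have : c = b := Option.some_injective α hcb
        subst this
        have hs'p : s' ∈ Q.parts := Finset.mem_of_mem_erase hs'
        have hst : t ≠ s' := fun hh => (Finset.ne_of_mem_erase hs') hh.symm
        exact Finset.disjoint_left.1 (Q.disjoint ht hs'p hst) hc hb
    · rcases Finset.mem_map.1 hx with ⟨b, hb, rfl⟩
      rcases Finset.mem_insert.1 hx' with h | h
      · exact (Option.some_ne_none b h).elim
      · rcases Finset.mem_map.1 h with ⟨c, hc, hcb⟩
        have : c = b := Option.some_injective α hcb
        subst this
        have hsp : s ∈ Q.parts := Finset.mem_of_mem_erase hs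
        have hst : s ≠ t := Finset.ne_of_mem_erase hs
        exact Finset.disjoint_left.1 (Q.disjoint hsp ht hst) hb hc
    · have hss' : s ≠ s' := fun h => huv (by rw [h])
      have hd : Disjoint s s' := Q.disjoint (Finset.mem_of_mem_erase hs)
        (Finset.mem_of_mem_erase hs') hss'
      rcases Finset.mem_map.1 hx with ⟨b, hb, rfl⟩
      rcases Finset.mem_map.1 hx' with ⟨c, hc, hcb⟩
      have : c = b := Option.some_injective α hcb
      subst this
      exact Finset.disjoint_left.1 hd hb hc
  · intro x
    cases x with
    | none => exact ⟨_, Finset.mem_insert_self _ _, Finset.mem_insert_self _ _⟩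
    | some a =>
      rcases Q.exists_mem (Finset.mem_univ a) with ⟨u, hu, hau⟩
      by_cases hut : u = t
      · subst hut
        exact ⟨_, Finset.mem_insert_self _ _,
          Finset.mem_insert_of_mem (Finset.mem_map_of_mem _ hau)⟩
      · exact ⟨u.map Function.Embedding.some,
          Finset.mem_insert_of_mem (Finset.mem_image_of_mem _ (Finset.mem_erase.2 ⟨hut, hu⟩)),
          Finset.mem_map_of_mem _ hau⟩
  · intro h
    rcases Finset.mem_insert.1 h with h | h
    · exact absurd h.symm (Finset.insert_ne_empty _ _)
    · rcases Finset.mem_image.1 h with ⟨u, hu, hue⟩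
      rw [Finset.map_eq_empty] at hue
      exact Q.ne_bot (Finset.mem_of_mem_erase hu) (hue.trans Finset.bot_eq_empty.symm)

lemma extendSingle_parts (Q : Finpartition (univ : Finset α)) :
    (extendSingle Q).parts
      = insert {none} (Q.parts.image fun t => t.map Function.Embedding.some) := rfl

lemma extendInto_parts (Q : Finpartition (univ : Finset α)) (t : Finset α) (ht : t ∈ Q.parts) :
    (extendInto Q t ht).parts
      = insert (insert none (t.map Function.Embedding.some))
        ((Q.parts.erase t).image fun u => u.map Function.Embedding.some) := rfl

lemma eraseNone_insert_none_map (t : Finset α) :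
    Finset.eraseNone (insert none (t.map Function.Embedding.some)) = t := by
  ext a; simp

lemma singleton_none_notin_image (X : Finset (Finset α)) :
    ({none} : Finset (Option α)) ∉ X.image fun u => u.map Function.Embedding.some := by
  intro h
  rcases Finset.mem_image.1 h with ⟨u, -, hu⟩
  have : (none : Option α) ∈ u.map Function.Embedding.some := by
    rw [hu]; exact Finset.mem_singleton_self _
  rcases Finset.mem_map.1 this with ⟨b, -, hb⟩
  exact Option.some_ne_none b hb

lemma extendSingle_parts_card (Q : Finpartition (univ : Finset α)) :
    (extendSingle Q).parts.card = Q.parts.card + 1 := by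
  rw [extendSingle_parts]
  rw [Finset.card_insert_of_notMem (singleton_none_notin_image _),
    Finset.card_image_of_injective _ (Finset.map_injective _)]

lemma big_notin_image (t : Finset α) (X : Finset (Finset α)) :
    insert none (t.map Function.Embedding.some) ∉
      X.image fun u => u.map Function.Embedding.some := by
  intro h
  rcases Finset.mem_image.1 h with ⟨u, -, hu⟩
  have : (none : Option α) ∈ u.map Function.Embedding.some := by
    rw [hu]; exact Finset.mem_insert_self _ _
  rcases Finset.mem_map.1 this with ⟨b, -, hb⟩
  exact Option.some_ne_none b hb

lemma extendInto_parts_card (Q : Finpartition (univ : Finset α)) (t : Finset α)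
    (ht : t ∈ Q.parts) : (extendInto Q t ht).parts.card = Q.parts.card := by
  rw [extendInto_parts]
  rw [Finset.card_insert_of_notMem (big_notin_image _ _),
    Finset.card_image_of_injective _ (Finset.map_injective _),
    Finset.card_erase_of_mem ht,
    Nat.sub_add_cancel (Finset.card_pos.2 ⟨t, ht⟩)]

lemma singleton_none_mem_extendSingle (Q : Finpartition (univ : Finset α)) :
    ({none} : Finset (Option α)) ∈ (extendSingle Q).parts := by
  rw [extendSingle_parts]; exact Finset.mem_insert_self _ _

lemma singleton_none_notin_extendInto (Q : Finpartition (univ : Finset α)) (t : Finset α)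
    (ht : t ∈ Q.parts) : ({none} : Finset (Option α)) ∉ (extendInto Q t ht).parts := by
  rw [extendInto_parts]
  intro h
  rcases Finset.mem_insert.1 h with h | h
  · rcases Q.nonempty_of_mem_parts ht with ⟨a, ha⟩
    have : (some a : Option α) ∈ ({none} : Finset (Option α)) := by
      rw [h]
      exact Finset.mem_insert_of_mem (Finset.mem_map_of_mem _ ha)
    simp at this
  · exact singleton_none_notin_image _ h

lemma part_none_extendInto (Q : Finpartition (univ : Finset α)) (t : Finset α)
    (ht : t ∈ Q.parts) :
    (extendInto Q t ht).part none = insert none (t.map Function.Embedding.some) := by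
  have h1 : insert none (t.map Function.Embedding.some) ∈ (extendInto Q t ht).parts := by
    rw [extendInto_parts]; exact Finset.mem_insert_self _ _
  exact (extendInto Q t ht).part_eq_of_mem h1 (Finset.mem_insert_self _ _)

lemma shrink_extendSingle (Q : Finpartition (univ : Finset α)) :
    shrink (extendSingle Q) = Q := by
  ext u
  rw [mem_shrink_parts]
  constructor
  · rintro ⟨hne, s, hs, rfl⟩
    rcases Finset.mem_insert.1 hs with rfl | hs
    · exact absurd Finset.eraseNone_none hne
    · rcases Finset.mem_image.1 hs with ⟨v, hv, rfl⟩
      rwa [Finset.eraseNone_map_some]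
  · intro hu
    refine ⟨fun h => Q.ne_bot hu (h.trans Finset.bot_eq_empty.symm),
      u.map Function.Embedding.some,
      Finset.mem_insert_of_mem (Finset.mem_image_of_mem _ hu),
      Finset.eraseNone_map_some u⟩

lemma shrink_extendInto (Q : Finpartition (univ : Finset α)) (t : Finset α)
    (ht : t ∈ Q.parts) : shrink (extendInto Q t ht) = Q := by
  ext u
  rw [mem_shrink_parts]
  constructor
  · rintro ⟨hne, s, hs, rfl⟩
    rcases Finset.mem_insert.1 hs with rfl | hs
    · rw [eraseNone_insert_none_map]
      exact ht
    · rcases Finset.mem_image.1 hs with ⟨v, hv, rfl⟩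
      rw [Finset.eraseNone_map_some]
      exact Finset.mem_of_mem_erase hv
  · intro hu
    have hune : u ≠ ∅ := fun h => Q.ne_bot hu (h.trans Finset.bot_eq_empty.symm)
    by_cases hut : u = t
    · subst hut
      exact ⟨hune, _, Finset.mem_insert_self _ _, eraseNone_insert_none_map u⟩
    · exact ⟨hune, u.map Function.Embedding.some,
        Finset.mem_insert_of_mem
          (Finset.mem_image_of_mem _ (Finset.mem_erase.2 ⟨hut, hu⟩)),
        Finset.eraseNone_map_some u⟩

lemma eraseNone_part_none_extendInto (Q : Finpartition (univ : Finset α)) (t : Finset α)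
    (ht : t ∈ Q.parts) :
    Finset.eraseNone ((extendInto Q t ht).part none) = t := by
  rw [part_none_extendInto, eraseNone_insert_none_map]

lemma none_mem_part_iff {s : Finset (Option α)} (hs : s ∈ P.parts)
    (hns : none ∈ s) : s = P.part none :=
  (P.part_eq_of_mem hs hns).symm

lemma extendSingle_shrink (h : {none} ∈ P.parts) : extendSingle (shrink P) = P := by
  ext u
  rw [extendSingle_parts]
  constructor
  · intro hu
    rcases Finset.mem_insert.1 hu with rfl | hu
    · exact h
    · rcases Finset.mem_image.1 hu with ⟨v, hv, rfl⟩
      rcases (mem_shrink_parts P).1 hv with ⟨hvne, s, hs, rfl⟩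
      have hns : none ∉ s := by
        intro hns
        have : s = {none} := P.eq_of_mem_parts hs h hns (Finset.mem_singleton_self _)
        exact hvne (this ▸ Finset.eraseNone_none)
      rwa [Finset.map_some_eraseNone, Finset.erase_eq_of_notMem hns]
  · intro hu
    by_cases hu1 : u = {none}
    · exact hu1 ▸ Finset.mem_insert_self _ _
    · have hns : none ∉ u := by
        intro hns
        exact hu1 (P.eq_of_mem_parts hu h hns (Finset.mem_singleton_self _))
      have hmem : Finset.eraseNone u ∈ (shrink P).parts := by
        rw [mem_shrink_parts]
        exact ⟨fun hh => hu1 ((eraseNone_eq_empty_iff P hu).1 hh), u, hu, rfl⟩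
      refine Finset.mem_insert_of_mem (Finset.mem_image.2 ⟨_, hmem, ?_⟩)
      rw [Finset.map_some_eraseNone, Finset.erase_eq_of_notMem hns]

lemma eraseNone_partNone_mem_shrink (h : {none} ∉ P.parts) :
    Finset.eraseNone (P.part none) ∈ (shrink P).parts := by
  have hT : P.part none ∈ P.parts := P.part_mem.2 (Finset.mem_univ _)
  rw [mem_shrink_parts]
  refine ⟨?_, _, hT, rfl⟩
  intro hh
  exact h (((eraseNone_eq_empty_iff P hT).1 hh) ▸ hT)

lemma extendInto_shrink (h : {none} ∉ P.parts) :
    extendInto (shrink P) (Finset.eraseNone (P.part none))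
      (eraseNone_partNone_mem_shrink P h) = P := by
  set T := P.part none with hTdef
  have hT : T ∈ P.parts := P.part_mem.2 (Finset.mem_univ _)
  have hnT : none ∈ T := P.mem_part (Finset.mem_univ _)
  have hbig : insert none ((Finset.eraseNone T).map Function.Embedding.some)
      = T := by
    rw [Finset.map_some_eraseNone, Finset.insert_erase hnT]
  ext u
  rw [extendInto_parts]
  constructor
  · intro hu
    rcases Finset.mem_insert.1 hu with rfl | hu
    · exact hbig ▸ hT
    · rcases Finset.mem_image.1 hu with ⟨v, hv, rfl⟩
      have hv2 := Finset.mem_of_mem_erase hv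
      have hvne := Finset.ne_of_mem_erase hv
      rcases (mem_shrink_parts P).1 hv2 with ⟨hvne', s, hs, rfl⟩
      have hsT : s ≠ T := fun hh => hvne (by rw [hh])
      have hns : none ∉ s := fun hns => hsT (none_mem_part_iff P hs hns)
      rwa [Finset.map_some_eraseNone, Finset.erase_eq_of_notMem hns]
  · intro hu
    by_cases huT : u = T
    · subst huT
      rw [hbig]
      exact Finset.mem_insert_self _ _
    · have hns : none ∉ u := fun hns => huT (none_mem_part_iff P hu hns)
      have hne : Finset.eraseNone u ≠ ∅ := by
        intro hh
        exact h (((eraseNone_eq_empty_iff P hu).1 hh) ▸ hu)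
      have hmem : Finset.eraseNone u ∈ (shrink P).parts :=
        (mem_shrink_parts P).2 ⟨hne, u, hu, rfl⟩
      have hneT : Finset.eraseNone u ≠ Finset.eraseNone T := by
        intro hh
        exact huT (eraseNone_injOn P hu hT hh)
      refine Finset.mem_insert_of_mem (Finset.mem_image.2
        ⟨_, Finset.mem_erase.2 ⟨hneT, hmem⟩, ?_⟩)
      rw [Finset.map_some_eraseNone, Finset.erase_eq_of_notMem hns]

noncomputable def optionEquiv (k : ℕ) :
    {P : Finpartition (univ : Finset (Option α)) // P.parts.card = k + 1} ≃
      ((Σ Q : {Q : Finpartition (univ : Finset α) // Q.parts.card = k + 1},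
        {t : Finset α // t ∈ Q.1.parts}) ⊕
       {Q : Finpartition (univ : Finset α) // Q.parts.card = k}) where
  toFun P :=
    if h : {none} ∈ P.1.parts then
      Sum.inr ⟨shrink P.1, by rw [shrink_parts_card_of_mem _ h, P.2]; omega⟩
    else
      Sum.inl ⟨⟨shrink P.1, by rw [shrink_parts_card_of_not_mem _ h, P.2]⟩,
        ⟨Finset.eraseNone (P.1.part none), eraseNone_partNone_mem_shrink P.1 h⟩⟩
  invFun x :=
    match x with
    | Sum.inl ⟨Q, t⟩ => ⟨extendInto Q.1 t.1 t.2, by rw [extendInto_parts_card, Q.2]⟩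
    | Sum.inr Q => ⟨extendSingle Q.1, by rw [extendSingle_parts_card, Q.2]⟩
  left_inv P := by
    by_cases h : {none} ∈ P.1.parts
    · simp only [dif_pos h]
      exact Subtype.ext (extendSingle_shrink P.1 h)
    · simp only [dif_neg h]
      exact Subtype.ext (extendInto_shrink P.1 h)
  right_inv x := by
    match x with
    | Sum.inl ⟨Q, t⟩ =>
      have h1 : {none} ∉ (extendInto Q.1 t.1 t.2).parts :=
        singleton_none_notin_extendInto _ _ _
      show (if h : _ then _ else _) = _
      rw [dif_neg h1]
      refine congrArg Sum.inl (Sigma.subtype_ext ?_ ?_)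
      · exact Subtype.ext (shrink_extendInto Q.1 t.1 t.2)
      · exact eraseNone_part_none_extendInto Q.1 t.1 t.2
    | Sum.inr Q =>
      show (if h : _ then _ else _) = _
      rw [dif_pos (singleton_none_mem_extendSingle Q.1)]
      exact congrArg Sum.inr (Subtype.ext (shrink_extendSingle Q.1))

lemma pcount_option (k : ℕ) :
    pcount (Option α) (k + 1) = (k + 1) * pcount α (k + 1) + pcount α k := by
  have h0 : pcount (Option α) (k + 1)
      = Fintype.card ((Σ Q : {Q : Finpartition (univ : Finset α) // Q.parts.card = k + 1},
          {t : Finset α // t ∈ Q.1.parts}) ⊕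
        {Q : Finpartition (univ : Finset α) // Q.parts.card = k}) :=
    Fintype.card_congr (optionEquiv k)
  rw [h0, Fintype.card_sum, Fintype.card_sigma]
  congr 1
  case _ =>
    have hQ : ∀ Q : {Q : Finpartition (univ : Finset α) // Q.parts.card = k + 1},
        Fintype.card {t : Finset α // t ∈ Q.1.parts} = k + 1 := fun Q => by
      have h1 : Fintype.card {t : Finset α // t ∈ Q.1.parts} = Q.1.parts.card :=
        (Fintype.card_congr (Equiv.refl _)).trans (Fintype.card_coe _)
      rw [h1, Q.2]
    rw [Finset.sum_congr rfl fun Q _ => hQ Q, Finset.sum_const, smul_eq_mul, mul_comm,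
      Finset.card_univ]
    exact congrArg (fun m => (k + 1) * m) (Fintype.card_congr (Equiv.refl _))

end OptionRec
end Partitions

section Stirling
open Finset

lemma stirling2_eq_pcount (m k : ℕ) : stirling2 m k = pcount (Fin m) k := by
  rw [stirling2, pcount, Nat.card_eq_fintype_card]

lemma stirling2_succ (m k : ℕ) :
    stirling2 (m + 1) (k + 1) = (k + 1) * stirling2 m (k + 1) + stirling2 m k := by
  rw [stirling2_eq_pcount, stirling2_eq_pcount, stirling2_eq_pcount,
    pcount_congr (finSuccEquiv m) (k + 1), pcount_option]

lemma stirling2_zero_zero : stirling2 0 0 = 1 := by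
  have hbot : (⊥ : Finset (Fin 0)) = univ := by
    ext x
    exact x.elim0
  have h : ∀ P : Finpartition (univ : Finset (Fin 0)), P.parts = ∅ := fun P =>
    Finpartition.parts_eq_empty_iff.2 hbot.symm
  rw [stirling2, Nat.card_eq_one_iff_unique]
  constructor
  · exact ⟨fun P P' => Subtype.ext (by ext t; rw [h P.1, h P'.1])⟩
  · exact ⟨⟨(Finpartition.empty (Finset (Fin 0))).copy hbot, by
      simp [Finpartition.copy_parts, Finpartition.empty]⟩⟩

lemma stirling2_succ_zero (m : ℕ) : stirling2 (m + 1) 0 = 0 := by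
  rw [stirling2]
  have : IsEmpty {P : Finpartition (Finset.univ : Finset (Fin (m + 1))) // P.parts.card = 0} := by
    constructor
    rintro ⟨P, hP⟩
    have h1 : P.parts = ∅ := Finset.card_eq_zero.1 hP
    have h2 : (univ : Finset (Fin (m + 1))) = ⊥ := Finpartition.parts_eq_empty_iff.1 h1
    have : (0 : Fin (m + 1)) ∈ (⊥ : Finset (Fin (m + 1))) := h2 ▸ Finset.mem_univ _
    simp at this
  exact Nat.card_of_isEmpty

lemma stirling2_eq_zero_of_lt {m k : ℕ} (h : m < k) : stirling2 m k = 0 := by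
  rw [stirling2]
  have : IsEmpty {P : Finpartition (Finset.univ : Finset (Fin m)) // P.parts.card = k} := by
    constructor
    rintro ⟨P, hP⟩
    have h1 : P.parts.card ≤ (univ : Finset (Fin m)).card := Finpartition.card_parts_le_card P
    rw [hP, Finset.card_univ, Fintype.card_fin] at h1
    omega
  exact Nat.card_of_isEmpty

end Stirling

section HNat
open Finset

lemma hNat_zero (k : ℕ) : hNat 0 k = 1 := by
  rw [hNat]
  have h : (Finset.univ.filter (fun f : Fin 0 → Fin k => Monotone f)) = univ :=
    Finset.filter_true_of_mem (fun f _ => fun a _ _ => a.elim0)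
  rw [h]
  simp

lemma hNat_succ_zero (n : ℕ) : hNat (n + 1) 0 = 0 := by
  rw [hNat]
  have : IsEmpty (Fin (n + 1) → Fin 0) := by
    constructor
    intro f
    exact (f 0).elim0
  simp [Finset.univ_eq_empty]

lemma monotone_snoc_last {n k : ℕ} {g : Fin n → Fin (k + 1)} (hg : Monotone g) :
    Monotone (Fin.snoc g (Fin.last k)) := by
  intro a b hab
  rcases Fin.eq_castSucc_or_eq_last b with ⟨j, rfl⟩ | rfl
  · rcases Fin.eq_castSucc_or_eq_last a with ⟨i, rfl⟩ | rfl
    · simp only [Fin.snoc_castSucc]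
      exact hg (by rwa [Fin.castSucc_le_castSucc_iff] at hab)
    · exact absurd (lt_of_le_of_lt hab (Fin.castSucc_lt_last j)) (lt_irrefl _)
  · simp only [Fin.snoc_last]
    exact Fin.le_last _

lemma hNat_succ_succ (n k : ℕ) :
    hNat (n + 1) (k + 1) = (k + 1) * hNat n (k + 1) + hNat (n + 1) k := by
  rw [hNat]
  rw [← Finset.sum_filter_add_sum_filter_not
    (univ.filter (fun f : Fin (n + 1) → Fin (k + 1) => Monotone f))
    (fun f => f (Fin.last n) = Fin.last k)]
  congr 1
  · -- last value is `last k`: drop the last coordinate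
    rw [mul_comm, hNat, Finset.sum_mul]
    refine Finset.sum_bij' (i := fun f _ => f ∘ Fin.castSucc)
      (j := fun g _ => Fin.snoc g (Fin.last k)) ?_ ?_ ?_ ?_ ?_
    · intro f hf
      rw [Finset.mem_filter, Finset.mem_filter] at hf
      rw [Finset.mem_filter]
      exact ⟨Finset.mem_univ _, hf.1.2.comp (fun a b hab => by
        rwa [Fin.castSucc_le_castSucc_iff])⟩
    · intro g hg
      rw [Finset.mem_filter] at hg
      rw [Finset.mem_filter, Finset.mem_filter]
      exact ⟨⟨Finset.mem_univ _, monotone_snoc_last hg.2⟩, Fin.snoc_last _ _⟩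
    · intro f hf
      rw [Finset.mem_filter, Finset.mem_filter] at hf
      funext x
      rcases Fin.eq_castSucc_or_eq_last x with ⟨i, rfl⟩ | rfl
      · simp [Fin.snoc_castSucc]
      · simp [Fin.snoc_last, hf.2]
    · intro g hg
      funext i
      simp [Fin.snoc_castSucc]
    · intro f hf
      rw [Finset.mem_filter, Finset.mem_filter] at hf
      rw [Fin.prod_univ_castSucc]
      simp [hf.2, Fin.val_last]
  · -- last value below `last k`: restrict the codomain
    rw [hNat]
    have key : ∀ f : Fin (n + 1) → Fin (k + 1), Monotone f → f (Fin.last n) ≠ Fin.last k →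
        ∀ x, (f x : ℕ) < k := by
      intro f hf hlast x
      have h1 : f x ≤ f (Fin.last n) := hf (Fin.le_last x)
      have h2 : f (Fin.last n) < Fin.last k :=
        lt_of_le_of_ne (Fin.le_last _) hlast
      have := lt_of_le_of_lt h1 h2
      rwa [Fin.lt_def, Fin.val_last] at this
    refine Finset.sum_bij' (i := fun f hf => fun x => (⟨(f x : ℕ), ?_⟩ : Fin k))
      (j := fun g _ => fun x => (g x).castSucc) ?_ ?_ ?_ ?_ ?_
    · rw [Finset.mem_filter, Finset.mem_filter] at hf
      exact key f hf.1.2 hf.2 x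
    · intro f hf
      rw [Finset.mem_filter, Finset.mem_filter] at hf
      rw [Finset.mem_filter]
      refine ⟨Finset.mem_univ _, fun a b hab => ?_⟩
      have := hf.1.2 hab
      rwa [Fin.le_def] at this ⊢
    · intro g hg
      rw [Finset.mem_filter] at hg
      rw [Finset.mem_filter, Finset.mem_filter]
      refine ⟨⟨Finset.mem_univ _, fun a b hab => ?_⟩, ?_⟩
      · have := hg.2 hab
        rw [Fin.le_def] at this ⊢
        simpa using this
      · intro hcontra
        have := congrArg Fin.val hcontra
        simp only [Fin.coe_castSucc, Fin.val_last] at this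
        exact absurd (this ▸ (g (Fin.last n)).isLt) (lt_irrefl _)
    · intro f hf
      funext x
      apply Fin.ext
      simp
    · intro g hg
      funext x
      apply Fin.ext
      simp
    · intro f hf
      apply Finset.prod_congr rfl
      intro x _
      simp

end HNat

lemma stirling2_eq_hNat : ∀ k n : ℕ, stirling2 (n + k) k = hNat n k := by
  intro k
  induction k with
  | zero =>
    intro n
    cases n with
    | zero => rw [stirling2_zero_zero, hNat_zero]
    | succ m => rw [stirling2_succ_zero, hNat_succ_zero]
  | succ k ih =>
    intro n
    induction n with
    | zero =>
      rw [Nat.zero_add, hNat_zero, stirling2_succ k k,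
        stirling2_eq_zero_of_lt (Nat.lt_succ_self k), mul_zero, Nat.zero_add]
      have := ih 0
      rw [Nat.zero_add, hNat_zero] at this
      exact this
    | succ m ihn =>
      rw [show m + 1 + (k + 1) = (m + k + 1) + 1 from by omega, stirling2_succ (m + k + 1) k,
        hNat_succ_succ m k]
      congr 1
      · rw [show m + k + 1 = m + (k + 1) from by omega, ihn]
      · rw [show m + k + 1 = (m + 1) + k from by omega, ih (m + 1)]

noncomputable def lattEquiv (n k : ℕ) (hk : 0 < k) :
    {q : (Fin n → ℕ) × (Fin n → ℕ) //
        Monotone q.1 ∧ (∀ i, q.1 i ≤ k - 1) ∧ ∀ i, q.2 i ≤ q.1 i} ≃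
    Σ f : {f : Fin n → Fin k // Monotone f}, ∀ i : Fin n, Fin ((f.1 i : ℕ) + 1) where
  toFun q :=
    ⟨⟨fun i => ⟨q.1.1 i, by have := q.2.2.1 i; omega⟩,
      fun a b hab => by
        simp only [Fin.mk_le_mk]
        exact q.2.1 hab⟩,
     fun i => ⟨q.1.2 i, by show q.1.2 i < q.1.1 i + 1; have := q.2.2.2 i; omega⟩⟩
  invFun x :=
    ⟨(fun i => (x.1.1 i : ℕ), fun i => (x.2 i : ℕ)),
     fun a b hab => x.1.2 hab,
     fun i => by show (x.1.1 i : ℕ) ≤ k - 1; have := (x.1.1 i).isLt; omega,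
     fun i => by show (x.2 i : ℕ) ≤ (x.1.1 i : ℕ); have := (x.2 i).isLt; omega⟩
  left_inv q := rfl
  right_inv x := rfl

lemma latt_card (n k : ℕ) (hk : 0 < k) :
    Nat.card {q : (Fin n → ℕ) × (Fin n → ℕ) //
        Monotone q.1 ∧ (∀ i, q.1 i ≤ k - 1) ∧ ∀ i, q.2 i ≤ q.1 i} = hNat n k := by
  rw [Nat.card_congr (lattEquiv n k hk), Nat.card_eq_fintype_card, Fintype.card_sigma]
  have h1 : ∀ f : {f : Fin n → Fin k // Monotone f},
      Fintype.card (∀ i : Fin n, Fin ((f.1 i : ℕ) + 1)) = ∏ i, ((f.1 i : ℕ) + 1) := by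
    intro f
    rw [Fintype.card_pi]
    exact Finset.prod_congr rfl fun i _ => Fintype.card_fin _
  rw [Finset.sum_congr rfl fun f _ => h1 f, hNat]
  exact (Finset.sum_subtype (p := fun f : Fin n → Fin k => Monotone f) _
    (fun f => by simp) (fun f => ∏ i, ((f i : ℕ) + 1))).symm

theorem stmt_9 (n k : ℕ) (hk : 0 < k) :
    Nat.card {q : (Fin n → ℕ) × (Fin n → ℕ) //
        Monotone q.1 ∧ (∀ i, q.1 i ≤ k - 1) ∧ ∀ i, q.2 i ≤ q.1 i} = stirling2 (n + k) k := by
  rw [latt_card n k hk, stirling2_eq_hNat k n]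
end

section
/- Fix n ≥ 1 and define G_n(k) = h_n(1², 2², …, (k+1)²) as a polynomial in k. Then the coefficient of x in G_n(x) equals 2n + Σ_{i=1}^{n} B_{2i}/i. -/
open scoped Classical
open Polynomial Finset

/-- The complete homogeneous symmetric polynomial of degree `n` evaluated at the squares
`1², 2², …, m²`, i.e. `∑_{1 ≤ z₁ ≤ ⋯ ≤ z_n ≤ m} z₁² ⋯ z_n²`. -/
noncomputable def hSq (n m : ℕ) : ℚ :=
  ∑ f ∈ Finset.univ.filter (fun f : Fin n → Fin m => Monotone f), ∏ i, ((f i : ℚ) + 1) ^ 2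



lemma hSq_zero (m : ℕ) : hSq 0 m = 1 := by simp [hSq, Monotone]

lemma hSq_nil (n : ℕ) (hn : 0 < n) : hSq n 0 = 0 := by
  have : Nonempty (Fin n) := ⟨⟨0, hn⟩⟩
  have : IsEmpty (Fin n → Fin 0) := inferInstance
  simp [hSq, Finset.univ_eq_empty]


lemma hSq_rec (n m : ℕ) :
    hSq (n+1) (m+1) = hSq (n+1) m + ((m : ℚ)+1)^2 * hSq n (m+1) := by
  classical
  have split := Finset.sum_filter_add_sum_filter_not
      (Finset.univ.filter (fun f : Fin (n+1) → Fin (m+1) => Monotone f))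
      (fun f => f (Fin.last n) = Fin.last m)
      (fun f => ∏ i, ((f i : ℚ) + 1) ^ 2)
  have hA : ∑ f ∈ (Finset.univ.filter (fun f : Fin (n+1) → Fin (m+1) => Monotone f)).filter
      (fun f => f (Fin.last n) = Fin.last m), ∏ i, ((f i : ℚ) + 1) ^ 2
      = ((m : ℚ)+1)^2 * hSq n (m+1) := by
    rw [hSq, Finset.mul_sum]
    refine Finset.sum_bij' (fun f _ => Fin.init f) (fun g _ => Fin.snoc g (Fin.last m))
      ?_ ?_ ?_ ?_ ?_
    · intro f hf
      simp only [Finset.mem_filter, Finset.mem_univ, true_and] at hf ⊢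
      intro a b hab
      exact hf.1 (Fin.castSucc_le_castSucc_iff.mpr hab)
    · intro g hg
      simp only [Finset.mem_filter, Finset.mem_univ, true_and] at hg ⊢
      refine ⟨?_, by simp [Fin.snoc_last]⟩
      intro a b hab
      rcases Fin.eq_castSucc_or_eq_last b with ⟨b', rfl⟩ | rfl
      · rcases Fin.eq_castSucc_or_eq_last a with ⟨a', rfl⟩ | rfl
        · simpa [Fin.snoc_castSucc] using hg (Fin.castSucc_le_castSucc_iff.mp hab)
        · exact absurd (lt_of_le_of_lt hab (Fin.castSucc_lt_last b')) (lt_irrefl _)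
      · simp [Fin.snoc_last, Fin.le_last]
    · intro f hf
      simp only [Finset.mem_filter, Finset.mem_univ, true_and] at hf
      have h := Fin.snoc_init_self f
      rw [hf.2] at h
      exact h
    · intro g _
      funext k
      simp [Fin.init, Fin.snoc_castSucc]
    · intro f hf
      simp only [Finset.mem_filter, Finset.mem_univ, true_and] at hf
      rw [Fin.prod_univ_castSucc (f := fun i => ((f i : ℚ) + 1)^2), hf.2, mul_comm]
      simp [Fin.init, Fin.val_last]
  have hB : ∑ f ∈ (Finset.univ.filter (fun f : Fin (n+1) → Fin (m+1) => Monotone f)).filter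
      (fun f => ¬ f (Fin.last n) = Fin.last m), ∏ i, ((f i : ℚ) + 1) ^ 2
      = hSq (n+1) m := by
    rw [hSq]
    have key : ∀ (f : Fin (n+1) → Fin (m+1)), Monotone f → f (Fin.last n) ≠ Fin.last m →
        ∀ k, f k ≠ Fin.last m := by
      intro f hf hl k h
      exact hl (le_antisymm (Fin.le_last _) (h ▸ hf (Fin.le_last k)))
    refine Finset.sum_bij' (fun f hf => fun k => (f k).castPred (by
        simp only [Finset.mem_filter, Finset.mem_univ, true_and] at hf
        exact key f hf.1 hf.2 k))
      (fun g _ => fun k => (g k).castSucc) ?_ ?_ ?_ ?_ ?_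
    · intro f hf
      simp only [Finset.mem_filter, Finset.mem_univ, true_and] at hf ⊢
      intro a b hab
      have := hf.1 hab
      simp only [Fin.le_def, Fin.coe_castPred]
      exact this
    · intro g hg
      simp only [Finset.mem_filter, Finset.mem_univ, true_and] at hg ⊢
      refine ⟨fun a b hab => Fin.castSucc_le_castSucc_iff.mpr (hg hab),
        Fin.ne_of_lt (Fin.castSucc_lt_last _)⟩
    · intro f hf
      funext k
      exact Fin.castSucc_castPred _ _
    · intro g hg
      funext k
      exact Fin.castPred_castSucc _
    · intro f hf
      apply Finset.prod_congr rfl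
      intro k _
      simp [Fin.coe_castPred]
  rw [hSq, ← split, hA, hB, add_comm]


lemma hSq_one (n : ℕ) : hSq n 1 = 1 := by
  induction n with
  | zero => exact hSq_zero 1
  | succ n ih =>
      rw [hSq_rec n 0, hSq_nil (n+1) (Nat.succ_pos n), ih]
      norm_num

lemma hSq_expand (n m : ℕ) :
    hSq n (m+1) = ∑ r ∈ range (n+1), ((m:ℚ)+1)^(2*r) * hSq (n-r) m := by
  induction n with
  | zero => simp [hSq_zero]
  | succ n ih =>
      rw [hSq_rec n m, ih, Finset.sum_range_succ' _ (n+1), Finset.mul_sum]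
      simp only [Nat.sub_zero, mul_zero, pow_zero, one_mul, Nat.sub_self]
      rw [add_comm]
      congr 1
      apply Finset.sum_congr rfl
      intro r hr
      rw [← mul_assoc, ← pow_add]
      congr 2
      · ring
      · omega

lemma sum_swap_tri (n : ℕ) (F : ℕ → ℕ → ℚ) :
    ∑ j ∈ Icc 1 n, ∑ r ∈ range (n - j + 1), F j r
    = ∑ r ∈ range (n+1), ∑ j ∈ Icc 1 (n - r), F j r := by
  rw [Finset.sum_sigma', Finset.sum_sigma']
  refine Finset.sum_bij' (fun p _ => (⟨p.2, p.1⟩ : Σ _ : ℕ, ℕ))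
    (fun p _ => (⟨p.2, p.1⟩ : Σ _ : ℕ, ℕ)) ?_ ?_ ?_ ?_ ?_
  · intro ⟨j, r⟩ hp
    simp only [Finset.mem_sigma, Finset.mem_Icc, Finset.mem_range] at hp ⊢
    omega
  · intro ⟨r, j⟩ hp
    simp only [Finset.mem_sigma, Finset.mem_Icc, Finset.mem_range] at hp ⊢
    omega
  · intro p _; rfl
  · intro p _; rfl
  · intro p _; rfl

lemma sum_tri2 (n : ℕ) (G : ℕ → ℚ) :
    ∑ j ∈ Icc 1 n, ∑ r ∈ range (n - j + 1), G (j + r)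
    = ∑ s ∈ Icc 1 n, (s : ℚ) * G s := by
  rw [Finset.sum_sigma']
  have : ∀ s ∈ Icc 1 n, (s:ℚ) * G s = ∑ j ∈ Icc 1 s, G s := by
    intro s hs
    rw [Finset.sum_const, Nat.card_Icc]
    simp [nsmul_eq_mul]
  rw [Finset.sum_congr rfl this, Finset.sum_sigma']
  refine Finset.sum_bij' (fun p _ => (⟨p.1 + p.2, p.1⟩ : Σ _ : ℕ, ℕ))
    (fun p _ => (⟨p.2, p.1 - p.2⟩ : Σ _ : ℕ, ℕ)) ?_ ?_ ?_ ?_ ?_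
  · intro ⟨j, r⟩ hp
    simp only [Finset.mem_sigma, Finset.mem_Icc, Finset.mem_range] at hp ⊢
    omega
  · intro ⟨s, j⟩ hp
    simp only [Finset.mem_sigma, Finset.mem_Icc, Finset.mem_range] at hp ⊢
    omega
  · intro ⟨j, r⟩ hp
    simp only [Finset.mem_sigma, Finset.mem_Icc, Finset.mem_range] at hp
    have : j + r - j = r := by omega
    simp [this]
  · intro ⟨s, j⟩ hp
    simp only [Finset.mem_sigma, Finset.mem_Icc, Finset.mem_range] at hp
    have : j + (s - j) = s := by omega
    simp [this]
  · intro p _; rfl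

lemma newton : ∀ m n : ℕ, (n:ℚ) * hSq n m
    = ∑ j ∈ Icc 1 n, (∑ i ∈ range m, ((i:ℚ)+1)^(2*j)) * hSq (n-j) m := by
  intro m
  induction m with
  | zero =>
      intro n
      simp only [Finset.range_zero, Finset.sum_empty, zero_mul, Finset.sum_const_zero]
      cases n with
      | zero => simp
      | succ n => rw [hSq_nil (n+1) (Nat.succ_pos n), mul_zero]
  | succ m ih =>
      intro n
      set x : ℚ := (m:ℚ) + 1 with hx
      have hp : ∀ j, (∑ i ∈ range (m+1), ((i:ℚ)+1)^(2*j))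
          = (∑ i ∈ range m, ((i:ℚ)+1)^(2*j)) + x^(2*j) := by
        intro j; rw [Finset.sum_range_succ]
      calc (n:ℚ) * hSq n (m+1)
          = ∑ r ∈ range (n+1), (n:ℚ) * (x^(2*r) * hSq (n-r) m) := by
            rw [hSq_expand, Finset.mul_sum]
        _ = ∑ r ∈ range (n+1), (((n-r : ℕ):ℚ) + (r:ℚ)) * (x^(2*r) * hSq (n-r) m) := by
            apply Finset.sum_congr rfl
            intro r hr
            simp only [Finset.mem_range] at hr
            congr 1
            have : (((n-r : ℕ):ℚ)) = (n:ℚ) - (r:ℚ) := by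
              have : r ≤ n := by omega
              push_cast [this]; ring
            rw [this]; ring
        _ = (∑ r ∈ range (n+1), x^(2*r) * (((n-r : ℕ):ℚ) * hSq (n-r) m))
            + ∑ r ∈ range (n+1), (r:ℚ) * (x^(2*r) * hSq (n-r) m) := by
            rw [← Finset.sum_add_distrib]
            apply Finset.sum_congr rfl
            intro r _; ring
        _ = ∑ j ∈ Icc 1 n, (∑ i ∈ range (m+1), ((i:ℚ)+1)^(2*j)) * hSq (n-j) (m+1) := by
            have e1 : ∀ j ∈ Icc 1 n, (∑ i ∈ range (m+1), ((i:ℚ)+1)^(2*j)) * hSq (n-j) (m+1)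
                = (∑ r ∈ range (n - j + 1),
                    (∑ i ∈ range m, ((i:ℚ)+1)^(2*j)) * (x^(2*r) * hSq (n-j-r) m))
                  + (∑ r ∈ range (n - j + 1), x^(2*(j+r)) * hSq (n-(j+r)) m) := by
              intro j hj
              rw [hp j, hSq_expand (n-j) m, add_mul, Finset.mul_sum, Finset.mul_sum]
              congr 1
              apply Finset.sum_congr rfl
              intro r _
              rw [← mul_assoc, ← pow_add, ← Nat.sub_sub]
              congr 2
              ring
            rw [Finset.sum_congr rfl e1, Finset.sum_add_distrib]
            congr 1
            · rw [sum_swap_tri n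
                (fun j r => (∑ i ∈ range m, ((i:ℚ)+1)^(2*j)) * (x^(2*r) * hSq (n-j-r) m))]
              symm
              apply Finset.sum_congr rfl
              intro r hr
              rw [ih (n-r), Finset.mul_sum]
              apply Finset.sum_congr rfl
              intro j hj
              rw [Nat.sub_right_comm]
              ring
            · rw [sum_tri2 n (fun t => x^(2*t) * hSq (n-t) m)]
              symm
              apply Finset.sum_subset
              · intro s hs
                simp only [Finset.mem_Icc, Finset.mem_range] at hs ⊢
                omega
              · intro s hs hns
                simp only [Finset.mem_Icc, Finset.mem_range] at hs hns
                have : s = 0 := by omega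
                subst this
                simp


noncomputable def faul (p : ℕ) : ℚ[X] :=
  C (((p:ℚ)+1)⁻¹) * (Polynomial.bernoulli (p+1) - C (_root_.bernoulli (p+1)))

lemma faul_eval (p n : ℕ) : (faul p).eval (n:ℚ) = ∑ k ∈ range n, (k:ℚ)^p := by
  have h := Polynomial.sum_range_pow_eq_bernoulli_sub n p
  have hne : ((p:ℚ)+1) ≠ 0 := by positivity
  rw [faul]
  simp only [eval_mul, eval_C, eval_sub]
  rw [Nat.succ_eq_add_one] at h
  field_simp
  linarith [h]

noncomputable def antidiff (Q : ℚ[X]) : ℚ[X] := ∑ p ∈ Q.support, C (Q.coeff p) * faul p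

lemma antidiff_eval (Q : ℚ[X]) (n : ℕ) :
    (antidiff Q).eval (n:ℚ) = ∑ k ∈ range n, Q.eval (k:ℚ) := by
  rw [antidiff, eval_finset_sum]
  simp only [eval_mul, eval_C, faul_eval]
  simp_rw [Finset.mul_sum]
  rw [Finset.sum_comm]
  apply Finset.sum_congr rfl
  intro k _
  rw [Polynomial.eval_eq_sum, Polynomial.sum_def]

noncomputable def Pn : ℕ → ℚ[X]
  | 0 => 1
  | (n+1) => (antidiff ((X + 1)^2 * Pn n)).comp (X + 1)

lemma hSq_sum (n k : ℕ) :
    hSq (n+1) (k+1) = ∑ t ∈ range (k+1), ((t:ℚ)+1)^2 * hSq n (t+1) := by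
  induction k with
  | zero =>
      rw [hSq_rec n 0, hSq_nil (n+1) (Nat.succ_pos n)]
      simp
  | succ k ih =>
      rw [hSq_rec n (k+1), ih, Finset.sum_range_succ _ (k+1)]

lemma Pn_eval : ∀ n k : ℕ, (Pn n).eval (k:ℚ) = hSq n (k+1) := by
  intro n
  induction n with
  | zero => intro k; simp [Pn, hSq_zero]
  | succ n ih =>
      intro k
      show ((antidiff ((X + 1)^2 * Pn n)).comp (X + 1)).eval (k:ℚ) = _
      rw [eval_comp]
      simp only [eval_add, eval_X, eval_one]
      have : (k:ℚ) + 1 = ((k+1:ℕ):ℚ) := by push_cast; ring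
      rw [this, antidiff_eval, hSq_sum]
      apply Finset.sum_congr rfl
      intro t _
      simp [ih t]

lemma poly_eq_of_nat (A B : ℚ[X]) (h : ∀ k:ℕ, A.eval (k:ℚ) = B.eval (k:ℚ)) : A = B := by
  by_contra hne
  have hsub : A - B ≠ 0 := sub_ne_zero.mpr hne
  have : {x : ℚ | (A - B).IsRoot x}.Infinite := by
    apply Set.infinite_of_injective_forall_mem (f := (Nat.cast : ℕ → ℚ)) Nat.cast_injective
    intro k
    simp [Polynomial.IsRoot, h k]
  exact hsub (Polynomial.eq_zero_of_infinite_isRoot _ this)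

noncomputable def Sjp (j : ℕ) : ℚ[X] := (faul (2*j)).comp (X + C 2)

lemma Sjp_eval (j k : ℕ) (hj : 1 ≤ j) :
    (Sjp j).eval (k:ℚ) = ∑ i ∈ range (k+1), ((i:ℚ)+1)^(2*j) := by
  rw [Sjp, eval_comp]
  simp only [eval_add, eval_X, eval_C]
  have : (k:ℚ) + 2 = ((k+2:ℕ):ℚ) := by push_cast; ring
  rw [this, faul_eval, Finset.sum_range_succ' _ (k+1)]
  have h0 : ((0:ℕ):ℚ)^(2*j) = 0 := by
    rw [Nat.cast_zero]
    exact zero_pow (by omega)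
  rw [h0, add_zero]
  apply Finset.sum_congr rfl
  intro i _
  push_cast
  ring


lemma coeff1_mul (A B : ℚ[X]) :
    (A*B).coeff 1 = A.coeff 0 * B.coeff 1 + A.coeff 1 * B.coeff 0 := by
  rw [Polynomial.coeff_mul, Finset.Nat.sum_antidiagonal_eq_sum_range_succ_mk]
  simp [Finset.sum_range_succ]

lemma Pn_coeff0 (m : ℕ) : (Pn m).coeff 0 = 1 := by
  rw [Polynomial.coeff_zero_eq_eval_zero]
  have := Pn_eval m 0
  simpa [hSq_one] using this

lemma Sjp_coeff0 (j : ℕ) (hj : 1 ≤ j) : (Sjp j).coeff 0 = 1 := by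
  rw [Polynomial.coeff_zero_eq_eval_zero]
  have := Sjp_eval j 0 hj
  simpa using this

lemma Sjp_coeff1 (j : ℕ) (hj : 1 ≤ j) :
    (Sjp j).coeff 1 = bernoulli' (2*j) + 2*j := by
  have h1 : (Sjp j).coeff 1 = (derivative (Sjp j)).eval 0 := by
    rw [← Polynomial.coeff_zero_eq_eval_zero, Polynomial.coeff_derivative]
    simp
  rw [h1, Sjp, Polynomial.derivative_comp]
  simp only [Polynomial.derivative_add, Polynomial.derivative_X, Polynomial.derivative_C,
    add_zero, one_mul, eval_mul, eval_comp, eval_add, eval_X, eval_C, eval_one]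
  rw [faul]
  rw [Polynomial.derivative_C_mul, Polynomial.derivative_sub, Polynomial.derivative_C, sub_zero,
    Polynomial.derivative_bernoulli_add_one]
  simp only [eval_mul, eval_C, eval_natCast, zero_add]
  have h2 : ((2:ℚ)) = 1 + 1 := by norm_num
  rw [h2, Polynomial.bernoulli_eval_one_add, Polynomial.bernoulli_eval_one]
  have hne : ((2*j:ℕ):ℚ) + 1 ≠ 0 := by positivity
  push_cast at hne ⊢
  field_simp
  simp
  ring_nf
  exact Or.inl trivial

lemma newton_poly (n : ℕ) : C (n:ℚ) * Pn n = ∑ j ∈ Icc 1 n, Sjp j * Pn (n-j) := by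
  apply poly_eq_of_nat
  intro k
  rw [eval_mul, eval_C, Pn_eval, eval_finset_sum]
  rw [newton (k+1) n]
  apply Finset.sum_congr rfl
  intro j hj
  simp only [Finset.mem_Icc] at hj
  rw [eval_mul, Sjp_eval j k hj.1, Pn_eval]

lemma crec (n : ℕ) : (n:ℚ) * (Pn n).coeff 1
    = ∑ j ∈ Icc 1 n, ((Pn (n-j)).coeff 1 + (bernoulli' (2*j) + 2*j)) := by
  have h := congrArg (fun Q : ℚ[X] => Q.coeff 1) (newton_poly n)
  simp only [Polynomial.coeff_C_mul, Polynomial.finset_sum_coeff] at h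
  rw [h]
  apply Finset.sum_congr rfl
  intro j hj
  simp only [Finset.mem_Icc] at hj
  rw [coeff1_mul, Sjp_coeff0 j hj.1, Sjp_coeff1 j hj.1, Pn_coeff0]
  ring

noncomputable def Rr (n : ℕ) : ℚ := 2 * (n : ℚ) + ∑ i ∈ Finset.Icc 1 n, bernoulli' (2 * i) / i

lemma sum_flip_Icc (n : ℕ) (f : ℕ → ℚ) :
    ∑ j ∈ Icc 1 n, f (n - j) = ∑ s ∈ range n, f s := by
  refine Finset.sum_bij' (fun j _ => n - j) (fun s _ => n - s) ?_ ?_ ?_ ?_ ?_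
  · intro j hj; simp only [Finset.mem_Icc, Finset.mem_range] at hj ⊢; omega
  · intro s hs; simp only [Finset.mem_Icc, Finset.mem_range] at hs ⊢; omega
  · intro j hj; simp only [Finset.mem_Icc] at hj; show n - (n - j) = j; omega
  · intro s hs; simp only [Finset.mem_range] at hs; show n - (n - s) = s; omega
  · intro j _; rfl

lemma Ridentity (n : ℕ) :
    ∑ j ∈ Icc 1 n, (Rr (n-j) + (bernoulli' (2*j) + 2*j)) = (n:ℚ) * Rr n := by
  rw [Finset.sum_add_distrib, sum_flip_Icc n Rr]
  induction n with
  | zero => simp [Rr]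
  | succ n ih =>
      rw [Finset.sum_range_succ, Finset.sum_Icc_succ_top (by omega : 1 ≤ n + 1)]
      have hR : Rr (n+1) = Rr n + 2 + bernoulli' (2*(n+1)) / ((n:ℚ)+1) := by
        rw [Rr, Rr, Finset.sum_Icc_succ_top (by omega : 1 ≤ n + 1)]
        push_cast
        ring
      have hne : ((n:ℚ)+1) ≠ 0 := by positivity
      rw [hR]
      push_cast
      field_simp
      field_simp at ih
      linarith [ih]

lemma key : ∀ n : ℕ, (Pn n).coeff 1 = Rr n := by
  intro n
  induction n using Nat.strong_induction_on with
  | _ n IH =>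
    match n with
    | 0 => simp [Pn, Rr, Polynomial.coeff_one]
    | (n+1) =>
        have h := crec (n+1)
        have h2 : ∑ j ∈ Icc 1 (n+1), ((Pn (n+1-j)).coeff 1 + (bernoulli' (2*j) + 2*j))
            = ∑ j ∈ Icc 1 (n+1), (Rr (n+1-j) + (bernoulli' (2*j) + 2*j)) := by
          apply Finset.sum_congr rfl
          intro j hj
          simp only [Finset.mem_Icc] at hj
          rw [IH (n+1-j) (by omega)]
        rw [h2, Ridentity] at h
        have hne : ((n+1:ℕ):ℚ) ≠ 0 := by positivity
        exact mul_left_cancel₀ hne h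

theorem stmt_19 (n : ℕ) (hn : 0 < n) (G : Polynomial ℚ)
    (hval : ∀ k : ℕ, G.eval (k : ℚ) = hSq n (k + 1)) :
    G.coeff 1 = 2 * (n : ℚ) + ∑ i ∈ Finset.Icc 1 n, bernoulli' (2 * i) / i := by
  have hG : G = Pn n :=
    poly_eq_of_nat _ _ (fun k => (hval k).trans (Pn_eval n k).symm)
  rw [hG, key n, Rr]
end
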